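/- In a Polish group G, if a subset A is a compact biter (for every compact K ⊆ G there exist an open set U and elements g,h ∈ G with U ∩ K nonempty and g(U ∩ K)h ⊆ A), then A is not Haar null. -/

import Mathlib

open MeasureTheory

variable {G : Type*} [Group G] [TopologicalSpace G] [IsTopologicalGroup G]
  [PolishSpace G] [MeasurableSpace G] [BorelSpace G]

/-- A set `A` is Haar null if it is contained in a Borel set `B` for which there is a
Borel probability measure `μ` with `μ(gBh) = 0` for all `g, h`. -/
def IsHaarNull (A : Set G) : Prop :=
  ∃ B : Set G, MeasurableSet B ∧ A ⊆ B ∧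
    ∃ μ : Measure G, IsProbabilityMeasure μ ∧ ∀ g h : G, μ ((fun x => g * x * h) '' B) = 0

/-- `A` is a compact biter: for every (nonempty) compact `K` there are an open `U` and
`g, h` with `U ∩ K ≠ ∅` and `g(U ∩ K)h ⊆ A`. -/
def IsCompactBiter (A : Set G) : Prop :=
  ∀ K : Set G, IsCompact K → K.Nonempty →
    ∃ U : Set G, IsOpen U ∧ (U ∩ K).Nonempty ∧
      ∃ g h : G, (fun x => g * x * h) '' (U ∩ K) ⊆ A

/-- Ulam tightness: a probability measure on a Polish space gives positive mass
to some compact set. -/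
lemma exists_isCompact_pos_measure {X : Type*} [TopologicalSpace X] [PolishSpace X]
    [MeasurableSpace X] [BorelSpace X] (μ : Measure X) [IsProbabilityMeasure μ] :
    ∃ K : Set X, IsCompact K ∧ 0 < μ K := by
  letI := TopologicalSpace.upgradeIsCompletelyMetrizable X
  have hne : Nonempty X := by
    by_contra h
    rw [not_nonempty_iff] at h
    have h1 : μ Set.univ = 1 := measure_univ
    rw [Set.univ_eq_empty_iff.2 h, measure_empty] at h1
    exact zero_ne_one h1
  set u : ℕ → X := TopologicalSpace.denseSeq X with hu_def
  have hu : DenseRange u := TopologicalSpace.denseRange_denseSeq X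
  -- the basic closed sets
  set S : ℕ → ℕ → Set X := fun n N => ⋃ m ∈ Finset.range N, Metric.closedBall (u m) (1/(n+1))
  have hS_closed : ∀ n N, IsClosed (S n N) := by
    intro n N
    apply Set.Finite.isClosed_biUnion (Finset.finite_toSet _)
    intro m _
    exact Metric.isClosed_closedBall
  have hS_meas : ∀ n N, MeasurableSet (S n N) := fun n N => (hS_closed n N).measurableSet
  have hS_mono : ∀ n, Monotone (S n) := by
    intro n N M hNM
    apply Set.biUnion_subset_biUnion_left
    exact_mod_cast Finset.range_subset_range.2 hNM
  have hS_union : ∀ n, (⋃ N, S n N) = Set.univ := by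
    intro n
    ext x
    simp only [Set.mem_univ, iff_true, Set.mem_iUnion]
    obtain ⟨m, hm⟩ := Metric.denseRange_iff.1 hu x (1/(n+1)) (by positivity)
    exact ⟨m + 1, Set.mem_biUnion (Finset.self_mem_range_succ m)
      (Metric.mem_closedBall.2 hm.le)⟩
  -- complements shrink to measure zero
  have key : ∀ n : ℕ, ∃ N : ℕ, μ (S n N)ᶜ < (2 : ENNReal)⁻¹ ^ (n + 2) := by
    intro n
    have hanti : Antitone (fun N => (S n N)ᶜ) := fun N M h => Set.compl_subset_compl.2 (hS_mono n h)
    have hiInter : (⋂ N, (S n N)ᶜ) = ∅ := by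
      rw [← Set.compl_iUnion, hS_union n, Set.compl_univ]
    have htend : Filter.Tendsto (fun N => μ (S n N)ᶜ) Filter.atTop (nhds 0) := by
      have := tendsto_measure_iInter_atTop (μ := μ)
        (fun N => ((hS_meas n N).compl).nullMeasurableSet) hanti ⟨0, measure_ne_top μ _⟩
      rwa [hiInter, measure_empty] at this
    have hpos : (0 : ENNReal) < (2 : ENNReal)⁻¹ ^ (n + 2) := by
      apply ENNReal.pow_pos
      simp
    exact (htend.eventually_lt_const hpos).exists
  choose N hN using key
  refine ⟨⋂ n, S n (N n), ?_, ?_⟩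
  · -- compactness: closed and totally bounded in a complete space
    apply TotallyBounded.isCompact_of_isClosed
    · rw [Metric.totallyBounded_iff]
      intro ε hε
      obtain ⟨n, hn⟩ := exists_nat_one_div_lt hε
      refine ⟨u '' (Finset.range (N n) : Set ℕ), (Set.Finite.image _ (Finset.finite_toSet _)), ?_⟩
      intro x hx
      have hx' : x ∈ S n (N n) := Set.mem_iInter.1 hx n
      simp only [S, Set.mem_iUnion] at hx'
      obtain ⟨m, hm, hxm⟩ := hx'
      refine Set.mem_biUnion ⟨m, hm, rfl⟩ ?_
      exact Metric.mem_ball.2 (lt_of_le_of_lt (Metric.mem_closedBall.1 hxm) hn)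
    · exact isClosed_iInter (fun n => hS_closed n (N n))
  · -- positive measure
    have hcompl : μ (⋂ n, S n (N n))ᶜ ≤ 2⁻¹ := by
      rw [Set.compl_iInter]
      refine le_trans (measure_iUnion_le _) ?_
      refine le_trans (ENNReal.tsum_le_tsum (fun n => (hN n).le)) ?_
      have : ∑' n : ℕ, (2 : ENNReal)⁻¹ ^ (n + 2) = (2 : ENNReal)⁻¹ ^ 2 * ∑' n : ℕ, 2⁻¹ ^ n := by
        rw [← ENNReal.tsum_mul_left]
        congr 1
        ext n
        ring
      rw [this, ENNReal.tsum_geometric, ENNReal.one_sub_inv_two, inv_inv, pow_two, mul_assoc,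
        ENNReal.inv_mul_cancel two_ne_zero ENNReal.ofNat_ne_top, mul_one]
    by_contra h
    push_neg at h
    have h0 : μ (⋂ n, S n (N n)) = 0 := le_antisymm h zero_le
    have : (1 : ENNReal) ≤ 2⁻¹ := by
      calc (1 : ENNReal) = μ Set.univ := measure_univ.symm
        _ ≤ μ (⋂ n, S n (N n)) + μ (⋂ n, S n (N n))ᶜ := by
            rw [← Set.union_compl_self (⋂ n, S n (N n))]
            exact measure_union_le _ _
        _ ≤ 0 + 2⁻¹ := add_le_add h0.le hcompl
        _ = 2⁻¹ := by rw [zero_add]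
    norm_num at this

/-- In a Polish group, a compact biter is not Haar null. -/
theorem not_haarNull_of_isCompactBiter (A : Set G) (hA : IsCompactBiter A) :
    ¬ IsHaarNull A := by
  rintro ⟨B, hB, hAB, μ, hμprob, hnull⟩
  obtain ⟨K, hK, hKpos⟩ := exists_isCompact_pos_measure μ
  -- remove the null portions of K using a countable basis
  set 𝒞 : Set (Set G) := {V ∈ TopologicalSpace.countableBasis G | μ (V ∩ K) = 0} with h𝒞
  set w : Set G := ⋃₀ 𝒞 with hw
  have hw_open : IsOpen w :=
    isOpen_sUnion fun V hV => (TopologicalSpace.isBasis_countableBasis G).isOpen hV.1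
  have h𝒞_count : 𝒞.Countable :=
    (TopologicalSpace.countable_countableBasis G).mono (Set.sep_subset _ _)
  have hw_null : μ (w ∩ K) = 0 := by
    have : w ∩ K = ⋃ V ∈ 𝒞, V ∩ K := by
      rw [hw, Set.sUnion_eq_biUnion, Set.iUnion₂_inter]
    rw [this]
    exact (measure_biUnion_null_iff h𝒞_count).2 fun V hV => hV.2
  set K' : Set G := K \ w with hK'def
  have hK'cpt : IsCompact K' := hK.diff hw_open
  have hK'pos : 0 < μ K' := by
    by_contra h
    push_neg at h
    have h0 : μ K' = 0 := le_antisymm h zero_le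
    have : μ K ≤ 0 := by
      calc μ K ≤ μ (K' ∪ (w ∩ K)) := measure_mono (fun x hx => by
              by_cases hxw : x ∈ w
              · exact Or.inr ⟨hxw, hx⟩
              · exact Or.inl ⟨hx, hxw⟩)
        _ ≤ μ K' + μ (w ∩ K) := measure_union_le _ _
        _ = 0 := by rw [h0, hw_null, add_zero]
    exact absurd (le_antisymm this zero_le) hKpos.ne'
  have hK'ne : K'.Nonempty := nonempty_of_measure_ne_zero hK'pos.ne'
  obtain ⟨U, hU, hUK', g, h, himg⟩ := hA K' hK'cpt hK'ne
  -- every portion of K' has positive measure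
  obtain ⟨x, hxU, hxK'⟩ := hUK'
  obtain ⟨V, hVb, hxV, hVU⟩ :=
    (TopologicalSpace.isBasis_countableBasis G).exists_subset_of_mem_open hxU hU
  have hVpos : μ (V ∩ K) ≠ 0 := by
    intro h0
    exact hxK'.2 (Set.mem_sUnion.2 ⟨V, ⟨hVb, h0⟩, hxV⟩)
  have hpos : 0 < μ (U ∩ K') := by
    have hsub : V ∩ K ⊆ (U ∩ K') ∪ (w ∩ K) := by
      rintro y ⟨hyV, hyK⟩
      by_cases hyw : y ∈ w
      · exact Or.inr ⟨hyw, hyK⟩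
      · exact Or.inl ⟨hVU hyV, hyK, hyw⟩
    by_contra hc
    push_neg at hc
    have h0 : μ (U ∩ K') = 0 := le_antisymm hc zero_le
    apply hVpos
    apply le_antisymm _ zero_le
    calc μ (V ∩ K) ≤ μ ((U ∩ K') ∪ (w ∩ K)) := measure_mono hsub
      _ ≤ μ (U ∩ K') + μ (w ∩ K) := measure_union_le _ _
      _ = 0 := by rw [h0, hw_null, add_zero]
  -- but the bite is contained in a translate of B, which is null
  have hsub : U ∩ K' ⊆ (fun x => g⁻¹ * x * h⁻¹) '' B := by
    intro y hy
    refine ⟨g * y * h, hAB (himg ⟨y, hy, rfl⟩), ?_⟩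
    group
  have : μ (U ∩ K') = 0 := measure_mono_null hsub (hnull g⁻¹ h⁻¹)
  exact hpos.ne' this
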